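/- Let $(X_n : n \in \omega)$ be a sequentially absorbing covering of a first countable topological space $X$ such that each subspace $X_n$ is Hausdorff. Then $X$ is Hausdorff. -/
import Mathlib

open Filter Topology Set

theorem seq_absorbing_hausdorff_pieces_t2
    {X : Type*} [TopologicalSpace X] [FirstCountableTopology X]
    (Xn : ℕ → Set X)
    (hcover : (⋃ n, Xn n) = Set.univ)
    (hclosed : ∀ n, IsClosed (Xn n))
    (hmono : Monotone Xn)
    (habs : ∀ (u : ℕ → X) (x : X), Tendsto u atTop (𝓝 x) →
      ∃ k, ∀ n, u n ∈ Xn k)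
    (hT2 : ∀ n, T2Space (Xn n)) :
    T2Space X := by
  rw [t2_iff_nhds]
  intro x y h
  obtain ⟨s, hs⟩ := (𝓝 x ⊓ 𝓝 y).exists_antitone_basis
  have hne : ∀ n, (s n).Nonempty := fun n =>
    Filter.nonempty_of_mem (hs.1.mem_of_mem trivial)
  choose u hu using hne
  have hux : Tendsto u atTop (𝓝 x) :=
    (hs.tendsto hu).mono_right inf_le_left
  have huy : Tendsto u atTop (𝓝 y) :=
    (hs.tendsto hu).mono_right inf_le_right
  obtain ⟨k, hk⟩ := habs u x hux
  have hx : x ∈ Xn k := (hclosed k).mem_of_tendsto hux (Eventually.of_forall hk)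
  have hy : y ∈ Xn k := (hclosed k).mem_of_tendsto huy (Eventually.of_forall hk)
  haveI := hT2 k
  have hvx : Tendsto (fun n => (⟨u n, hk n⟩ : Xn k)) atTop (𝓝 ⟨x, hx⟩) :=
    tendsto_subtype_rng.2 hux
  have hvy : Tendsto (fun n => (⟨u n, hk n⟩ : Xn k)) atTop (𝓝 ⟨y, hy⟩) :=
    tendsto_subtype_rng.2 huy
  exact Subtype.ext_iff.1 (tendsto_nhds_unique hvx hvy)
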